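/- Let k ≥ 1 and let a_1, …, a_k be pairwise relatively prime positive integers. Then (k−1)·Π − Σ is the greatest integer (in ℤ, where negative integers have zero representations) having no representation in terms of (A_1, …, A_k); that is, g_0(A_1, …, A_k) = (k−1)·Π − Σ. -/

import Mathlib

noncomputable def numRep {k : ℕ} (A : Fin k → ℕ) (x : ℤ) : ℕ :=
  {m : Fin k → ℕ | (∑ i, (m i : ℤ) * (A i : ℤ)) = x}.ncard

theorem stmt13 (k : ℕ) (hk : 1 ≤ k)
    (a : Fin k → ℕ) (ha : ∀ i, 0 < a i)
    (hcop : ∀ i j, i ≠ j → Nat.Coprime (a i) (a j)) :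
    IsGreatest
      {x : ℤ | numRep (fun i => (∏ j, a j) / a i) x = 0}
      (((k : ℤ) - 1) * ((∏ j, a j : ℕ) : ℤ)
        - ((∑ i, (∏ j, a j) / a i : ℕ) : ℤ)) := by
  set P : ℕ := ∏ j, a j with hPdef
  set A : Fin k → ℕ := fun i => P / a i with hAdef
  set F : ℤ := ((k : ℤ) - 1) * (P : ℤ) - ((∑ i, A i : ℕ) : ℤ) with hFdef
  have hdvdP : ∀ i, a i ∣ P := fun i => Finset.dvd_prod_of_mem a (Finset.mem_univ i)
  have hPA : ∀ i, a i * A i = P := fun i => Nat.mul_div_cancel' (hdvdP i)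
  have hAerase : ∀ i, A i = ∏ j ∈ Finset.univ.erase i, a j := by
    intro i
    have h1 := Finset.mul_prod_erase Finset.univ a (Finset.mem_univ i)
    have h2 : a i * A i = a i * ∏ j ∈ Finset.univ.erase i, a j := by
      rw [hPA i, hPdef]; exact h1.symm
    exact Nat.eq_of_mul_eq_mul_left (ha i) h2
  have hApos : ∀ i, 0 < A i := by
    intro i; rw [hAerase]; exact Finset.prod_pos fun j _ => ha j
  have hPpos : 0 < P := Finset.prod_pos fun j _ => ha j
  have hdvdA : ∀ i j, i ≠ j → a i ∣ A j := by
    intro i j hij; rw [hAerase]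
    exact Finset.dvd_prod_of_mem a (Finset.mem_erase.mpr ⟨hij, Finset.mem_univ i⟩)
  have hcopA : ∀ i, Nat.Coprime (a i) (A i) := by
    intro i; rw [hAerase]
    exact Nat.Coprime.prod_right fun j hj =>
      hcop i j (Ne.symm (Finset.mem_erase.mp hj).1)
  have hkP : ∑ i, ((a i : ℤ) * (A i : ℤ)) = (k : ℤ) * P := by
    have : ∀ i ∈ Finset.univ, ((a i : ℤ) * (A i : ℤ)) = (P : ℤ) := by
      intro i _; exact_mod_cast congrArg (Nat.cast : ℕ → ℤ) (hPA i)
    rw [Finset.sum_congr rfl this, Finset.sum_const, Finset.card_univ, Fintype.card_fin,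
      nsmul_eq_mul]
  have hFeq : F = ∑ i, ((a i : ℤ) - 1) * (A i : ℤ) - (P : ℤ) := by
    have : ∑ i, ((a i : ℤ) - 1) * (A i : ℤ)
        = ∑ i, ((a i : ℤ) * A i) - ∑ i, (A i : ℤ) := by
      rw [← Finset.sum_sub_distrib]; apply Finset.sum_congr rfl; intro i _; ring
    rw [hFdef, this, hkP, Nat.cast_sum]; ring
  -- divisibility of F - (a i - 1) * A i by a i
  have hsum_split : ∀ (f : Fin k → ℤ) (i : Fin k),
      ∑ j, f j - f i = ∑ j ∈ Finset.univ.erase i, f j := by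
    intro f i
    rw [← Finset.sum_erase_add Finset.univ f (Finset.mem_univ i)]; ring
  have herase_dvd : ∀ (i : Fin k) (g : Fin k → ℤ),
      (a i : ℤ) ∣ ∑ j ∈ Finset.univ.erase i, g j * (A j : ℤ) := by
    intro i g
    refine Finset.dvd_sum fun j hj => Dvd.dvd.mul_left ?_ _
    exact_mod_cast Int.natCast_dvd_natCast.mpr (hdvdA i j (Ne.symm (Finset.mem_erase.mp hj).1))
  have hFmod : ∀ i, (a i : ℤ) ∣ F - ((a i : ℤ) - 1) * (A i : ℤ) := by
    intro i
    have h1 : F - ((a i : ℤ) - 1) * (A i : ℤ)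
        = (∑ j ∈ Finset.univ.erase i, ((a j : ℤ) - 1) * (A j : ℤ)) - (P : ℤ) := by
      rw [hFeq, ← hsum_split (fun j => ((a j : ℤ) - 1) * (A j : ℤ)) i]; ring
    rw [h1]
    exact dvd_sub (herase_dvd i _) (Int.natCast_dvd_natCast.mpr (hdvdP i))
  -- no representation of F
  have hnone : ∀ m : Fin k → ℕ, (∑ i, (m i : ℤ) * (A i : ℤ)) ≠ F := by
    intro m hm
    have hge : ∀ i, (a i : ℤ) - 1 ≤ (m i : ℤ) := by
      intro i
      have h1 : (a i : ℤ) ∣ F - (m i : ℤ) * (A i : ℤ) := by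
        rw [← hm, hsum_split (fun j => (m j : ℤ) * (A j : ℤ)) i]
        exact herase_dvd i _
      have h2 : (a i : ℤ) ∣ ((m i : ℤ) - ((a i : ℤ) - 1)) * (A i : ℤ) := by
        have := dvd_sub (hFmod i) h1
        have heq : (F - ((a i : ℤ) - 1) * (A i : ℤ)) - (F - (m i : ℤ) * (A i : ℤ))
            = ((m i : ℤ) - ((a i : ℤ) - 1)) * (A i : ℤ) := by ring
        rwa [heq] at this
      have hcop' : IsCoprime (a i : ℤ) (A i : ℤ) :=
        Nat.isCoprime_iff_coprime.mpr (hcopA i)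
      have h3 : (a i : ℤ) ∣ (m i : ℤ) - ((a i : ℤ) - 1) :=
        hcop'.dvd_of_dvd_mul_right h2
      have h4 : (a i : ℤ) ∣ (m i : ℤ) + 1 := by
        have heq : (m i : ℤ) + 1 = ((m i : ℤ) - ((a i : ℤ) - 1)) + a i := by ring
        rw [heq]; exact dvd_add h3 dvd_rfl
      have h5 : (a i : ℤ) ≤ (m i : ℤ) + 1 := Int.le_of_dvd (by positivity) h4
      linarith
    have hsum : (∑ i, ((a i : ℤ) - 1) * (A i : ℤ)) ≤ ∑ i, (m i : ℤ) * (A i : ℤ) :=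
      Finset.sum_le_sum fun i _ =>
        mul_le_mul_of_nonneg_right (hge i) (by positivity)
    have hP1 : (1 : ℤ) ≤ (P : ℤ) := by exact_mod_cast hPpos
    rw [hm] at hsum
    have := hFeq
    linarith
  -- every x > F has a representation
  have hex : ∀ x : ℤ, F < x → ∃ m : Fin k → ℕ, ∑ i, (m i : ℤ) * (A i : ℤ) = x := by
    intro x hx
    have hc : ∀ i, ∃ c : ℕ, c < a i ∧ (a i : ℤ) ∣ x - (c : ℤ) * (A i : ℤ) := by
      intro i
      haveI : NeZero (a i) := ⟨(ha i).ne'⟩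
      refine ⟨(((x : ZMod (a i)) * ((A i : ZMod (a i)))⁻¹)).val, ZMod.val_lt _, ?_⟩
      have hu : IsUnit ((A i : ZMod (a i))) :=
        (ZMod.isUnit_iff_coprime (A i) (a i)).mpr ((hcopA i).symm)
      rw [← ZMod.intCast_zmod_eq_zero_iff_dvd]
      push_cast
      rw [ZMod.natCast_val, ZMod.cast_id]
      rw [mul_assoc, ZMod.inv_mul_of_unit _ hu, mul_one, sub_self]
    choose c hc_lt hc_cong using hc
    set y : ℤ := ∑ i, (c i : ℤ) * (A i : ℤ) with hydef
    have hdvd_xy : (P : ℤ) ∣ x - y := by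
      have hall : ∀ i, (a i : ℤ) ∣ x - y := by
        intro i
        have heq : x - y = (x - (c i : ℤ) * (A i : ℤ))
            - ((∑ j, (c j : ℤ) * (A j : ℤ)) - (c i : ℤ) * (A i : ℤ)) := by
          rw [hydef]; ring
        rw [heq, hsum_split (fun j => (c j : ℤ) * (A j : ℤ)) i]
        exact dvd_sub (hc_cong i) (herase_dvd i _)
      have hpair : ((Finset.univ : Finset (Fin k)) : Set (Fin k)).Pairwise
          (Function.onFun IsCoprime fun i => (a i : ℤ)) := by
        intro i _ j _ hij
        exact Nat.isCoprime_iff_coprime.mpr (hcop i j hij)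
      have := Finset.prod_dvd_of_coprime hpair (fun i _ => hall i)
      have hcast : (∏ i, (a i : ℤ)) = (P : ℤ) := by rw [hPdef]; push_cast; rfl
      rwa [hcast] at this
    obtain ⟨t, ht⟩ := hdvd_xy
    have hy_le : y ≤ ∑ i, ((a i : ℤ) - 1) * (A i : ℤ) := by
      refine Finset.sum_le_sum fun i _ => mul_le_mul_of_nonneg_right ?_ (by positivity)
      have := hc_lt i
      have : (c i : ℤ) < a i := by exact_mod_cast this
      linarith
    have hP1 : (1 : ℤ) ≤ (P : ℤ) := by exact_mod_cast hPpos
    have ht0 : 0 ≤ t := by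
      by_contra hneg
      push_neg at hneg
      have htle : t ≤ -1 := by omega
      have : (P : ℤ) * t ≤ (P : ℤ) * (-1) :=
        mul_le_mul_of_nonneg_left htle (by linarith)
      -- x - y > F - (∑ (a_i-1) A_i) = -P
      have hxy : -(P : ℤ) < x - y := by
        have := hFeq
        linarith
      rw [ht] at hxy
      linarith
    refine ⟨fun i => c i + (if i = ⟨0, hk⟩ then t.toNat * a ⟨0, hk⟩ else 0), ?_⟩
    have hsplit : ∑ i, ((c i + (if i = ⟨0, hk⟩ then t.toNat * a ⟨0, hk⟩ else 0) : ℕ) : ℤ) * (A i : ℤ)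
        = y + ∑ i, (if i = ⟨0, hk⟩ then ((t.toNat * a ⟨0, hk⟩ : ℕ) : ℤ) * (A i : ℤ) else 0) := by
      rw [hydef, ← Finset.sum_add_distrib]
      apply Finset.sum_congr rfl
      intro i _
      by_cases hi : i = ⟨0, hk⟩ <;> simp [hi] <;> push_cast <;> ring
    rw [hsplit, Finset.sum_ite_eq' Finset.univ (⟨0, hk⟩ : Fin k)
      (fun i => ((t.toNat * a ⟨0, hk⟩ : ℕ) : ℤ) * (A i : ℤ))]
    simp only [Finset.mem_univ, if_true]
    have hPA0 : ((a ⟨0, hk⟩ : ℤ)) * (A ⟨0, hk⟩ : ℤ) = (P : ℤ) := by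
      exact_mod_cast congrArg (Nat.cast : ℕ → ℤ) (hPA ⟨0, hk⟩)
    have htnat : ((t.toNat : ℤ)) = t := Int.toNat_of_nonneg ht0
    push_cast
    rw [htnat]
    have : t * (a ⟨0, hk⟩ : ℤ) * (A ⟨0, hk⟩ : ℤ) = t * (P : ℤ) := by
      rw [mul_assoc, hPA0]
    rw [mul_assoc, mul_comm (a ⟨0, hk⟩ : ℤ), ← mul_assoc] at this ⊢
    rw [this]
    linarith [ht]
  -- finiteness of representation sets
  have hfin : ∀ x : ℤ, {m : Fin k → ℕ | ∑ i, (m i : ℤ) * (A i : ℤ) = x}.Finite := by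
    intro x
    apply Set.Finite.subset (Set.finite_Iic (fun _ => x.toNat : Fin k → ℕ))
    intro m hm
    simp only [Set.mem_setOf_eq] at hm
    simp only [Set.mem_Iic, Pi.le_def]
    intro i
    have h1 : (m i : ℤ) * (A i : ℤ) ≤ x := by
      rw [← hm]
      exact Finset.single_le_sum (f := fun j => (m j : ℤ) * (A j : ℤ))
        (fun j _ => by positivity) (Finset.mem_univ i)
    have h2 : (m i : ℤ) ≤ (m i : ℤ) * (A i : ℤ) :=
      le_mul_of_one_le_right (by positivity) (by exact_mod_cast hApos i)
    have h3 : (m i : ℤ) ≤ x := le_trans h2 h1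
    omega
  constructor
  · show numRep A F = 0
    have hempty : {m : Fin k → ℕ | ∑ i, (m i : ℤ) * (A i : ℤ) = F} = ∅ :=
      Set.eq_empty_iff_forall_notMem.mpr hnone
    rw [numRep, hempty, Set.ncard_empty]
  · intro x hx
    by_contra hlt
    push_neg at hlt
    obtain ⟨m, hm⟩ := hex x hlt
    have hx0 : numRep A x = 0 := hx
    rw [numRep, Set.ncard_eq_zero (hfin x)] at hx0
    exact absurd (hx0 ▸ hm : m ∈ (∅ : Set (Fin k → ℕ))) (Set.notMem_empty m)
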